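/- Fix a real number λ > 0. For k ∈ ℕ define γ_k := √(ln(4k/π²)/(k·λ)), β_k := 1/(2√k), p_k := cos(2β_k), q_k := sin(2β_k), c_k := cos(γ_k), A_k := (p_k + i·q_k·(c_k)^{kλ})^k ∈ ℂ, and F_k := 1/2 + (sin(γ_k)/2)·Im(A_k). Then √(kλ/ln k) · (F_k − 1/2) converges, as k → ∞, to 1/(2√e). -/

import Mathlib

open Filter

open Topology Real

lemma sin_div_lim : Tendsto (fun x : ℝ => Real.sin x / x) (nhdsWithin 0 {0}ᶜ) (nhds 1) := by
  have h := Real.hasDerivAt_sin 0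
  rw [Real.cos_zero] at h
  have h2 := hasDerivAt_iff_tendsto_slope.mp h
  refine h2.congr fun x => ?_
  simp [slope, Real.sin_zero, div_eq_inv_mul]

lemma cos_sub_one_div_sq_lim :
    Tendsto (fun x : ℝ => (Real.cos x - 1) / x ^ 2) (nhdsWithin 0 {0}ᶜ) (nhds (-(1/2))) := by
  have hhalf : Tendsto (fun x : ℝ => x / 2) (nhdsWithin 0 {0}ᶜ) (nhdsWithin 0 {0}ᶜ) := by
    apply tendsto_nhdsWithin_of_tendsto_nhds_of_eventually_within
    · have : Tendsto (fun x : ℝ => x / 2) (nhds 0) (nhds (0/2)) :=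
        (continuous_id.div_const 2).tendsto 0
      simpa using this.mono_left nhdsWithin_le_nhds
    · filter_upwards [self_mem_nhdsWithin] with x hx
      simp only [Set.mem_compl_iff, Set.mem_singleton_iff] at hx ⊢
      intro h; apply hx; linarith
  have h1 : Tendsto (fun x : ℝ => -(1/2) * (Real.sin (x/2) / (x/2)) ^ 2)
      (nhdsWithin 0 {0}ᶜ) (nhds (-(1/2))) := by
    have := ((sin_div_lim.comp hhalf).pow 2).const_mul (-(1/2) : ℝ)
    simpa using this
  refine Tendsto.congr' ?_ h1
  filter_upwards [self_mem_nhdsWithin] with x hx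
  simp only [Set.mem_compl_iff, Set.mem_singleton_iff] at hx
  have hc : Real.cos x - 1 = -(2 * Real.sin (x/2) ^ 2) := by
    have := Real.cos_two_mul (x/2)
    have h2 := Real.sin_sq_add_cos_sq (x/2)
    rw [show 2 * (x/2) = x by ring] at this
    nlinarith
  rw [hc]
  field_simp

lemma clog_div_lim : Tendsto (fun z : ℂ => Complex.log z / (z - 1)) (nhdsWithin 1 {1}ᶜ) (nhds 1) := by
  have h := Complex.hasDerivAt_log Complex.one_mem_slitPlane
  rw [inv_one] at h
  have h2 := hasDerivAt_iff_tendsto_slope.mp h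
  refine h2.congr fun z => ?_
  simp [slope, Complex.log_one, div_eq_inv_mul]

lemma pow_tendsto_cexp {z : ℕ → ℂ} {w : ℂ}
    (h : Tendsto (fun k : ℕ => (k : ℂ) * (z k - 1)) atTop (nhds w))
    (hne : ∀ᶠ k : ℕ in atTop, z k ≠ 1) :
    Tendsto (fun k => z k ^ k) atTop (nhds (Complex.exp w)) := by
  have hinv : Tendsto (fun k : ℕ => ((k : ℂ))⁻¹) atTop (nhds 0) := by
    rw [tendsto_zero_iff_norm_tendsto_zero]
    have : Tendsto (fun k : ℕ => ((k : ℝ))⁻¹) atTop (nhds 0) :=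
      tendsto_inv_atTop_zero.comp tendsto_natCast_atTop_atTop
    refine this.congr fun k => ?_
    simp
  have hz1 : Tendsto z atTop (nhds 1) := by
    have hsub : Tendsto (fun k => z k - 1) atTop (nhds 0) := by
      refine Tendsto.congr' ?_ (by simpa using h.mul hinv)
      filter_upwards [eventually_ge_atTop 1] with k hk
      have hk0 : (k : ℂ) ≠ 0 := Nat.cast_ne_zero.mpr (by omega)
      field_simp
    simpa using hsub.add (tendsto_const_nhds (x := (1 : ℂ)))
  have hzne : Tendsto z atTop (nhdsWithin 1 {1}ᶜ) :=
    tendsto_nhdsWithin_of_tendsto_nhds_of_eventually_within _ hz1 hne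
  have hlog : Tendsto (fun k : ℕ => (k : ℂ) * Complex.log (z k)) atTop (nhds w) := by
    have h2 := clog_div_lim.comp hzne
    refine Tendsto.congr' ?_ (by simpa using h.mul h2)
    filter_upwards [hne] with k hk
    have hz : z k - 1 ≠ 0 := sub_ne_zero.mpr hk
    field_simp
  have hexp := (Complex.continuous_exp.tendsto w).comp hlog
  refine Tendsto.congr' ?_ hexp
  have hz0 : ∀ᶠ k : ℕ in atTop, z k ≠ 0 := hz1.eventually_ne one_ne_zero
  filter_upwards [hz0] with k hk
  simp only [Function.comp_def]
  rw [Complex.exp_nat_mul, Complex.exp_log hk]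

lemma log_cos_bound {x : ℝ} (hx : |x| ≤ 1/2) : |Real.log (Real.cos x) + x^2/2| ≤ 3 * x^4 := by
  have hx2 : x ^ 2 ≤ 1/4 := by
    have := abs_nonneg x
    nlinarith [sq_abs x]
  have hc_pos : 0 < Real.cos x := by
    apply Real.cos_pos_of_mem_Ioo
    constructor
    · nlinarith [Real.pi_gt_three, neg_abs_le x]
    · nlinarith [Real.pi_gt_three, le_abs_self x]
  have habs4 : |x| ^ 4 = x ^ 4 := by
    rw [← abs_pow]; exact abs_of_nonneg (by positivity)
  have h1 : Real.cos x ≤ 1 - x^2/2 + 5/96 * x^4 := by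
    have hb := Real.cos_bound (le_trans hx (by norm_num))
    rw [habs4] at hb
    have := (abs_le.mp hb).2
    linarith
  have h2 : 1 - x^2/2 ≤ Real.cos x := Real.one_sub_sq_div_two_le_cos
  have hup : Real.log (Real.cos x) ≤ Real.cos x - 1 := Real.log_le_sub_one_of_pos hc_pos
  have hlo : 1 - (Real.cos x)⁻¹ ≤ Real.log (Real.cos x) := by
    have h3 := Real.log_le_sub_one_of_pos (inv_pos.mpr hc_pos)
    rw [Real.log_inv] at h3
    linarith
  rw [abs_le]
  constructor
  · have hinv : (Real.cos x)⁻¹ ≤ 1 + x^2/2 + 3*x^4 := by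
      rw [inv_le_iff_one_le_mul₀ hc_pos]
      nlinarith
    linarith
  · nlinarith

set_option maxHeartbeats 1000000 in
theorem qaoa_satisfied_fraction_limit (lam : ℝ) (hlam : 0 < lam) :
    Tendsto (fun k : ℕ =>
        let γ : ℝ := Real.sqrt (Real.log (4 * k / Real.pi ^ 2) / (k * lam))
        let β : ℝ := 1 / (2 * Real.sqrt k)
        let A : ℂ := (((Real.cos (2 * β)) : ℂ)
          + Complex.I * ((Real.sin (2 * β)) : ℂ)
            * (((Real.cos γ) ^ ((k : ℝ) * lam) : ℝ) : ℂ)) ^ k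
        let F : ℝ := 1 / 2 + (Real.sin γ / 2) * A.im
        Real.sqrt ((k * lam) / Real.log k) * (F - 1 / 2))
      atTop (nhds (1 / (2 * Real.sqrt (Real.exp 1)))) := by
  have pi_pos := Real.pi_pos
  set c0 : ℝ := Real.log (4 / Real.pi ^ 2) with hc0
  set L : ℕ → ℝ := fun k => Real.log (4 * k / Real.pi ^ 2) with hLdef
  set γ : ℕ → ℝ := fun k => Real.sqrt (L k / (k * lam)) with hγdef
  set x : ℕ → ℝ := fun k => (Real.sqrt k)⁻¹ with hxdef
  set cp : ℕ → ℝ := fun k => Real.cos (γ k) ^ ((k : ℝ) * lam) with hcpdef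
  set ε : ℕ → ℝ := fun k => ((k : ℝ) * lam) * Real.log (Real.cos (γ k)) + L k / 2 with hεdef
  have h2β : ∀ k : ℕ, 2 * (1 / (2 * Real.sqrt k)) = x k := by
    intro k
    rcases eq_or_ne (Real.sqrt k) 0 with h | h
    · simp [hxdef, h]
    · rw [hxdef]; field_simp
  -- basic tendsto facts
  have hnat : Tendsto (fun k : ℕ => (k : ℝ)) atTop atTop := tendsto_natCast_atTop_atTop
  have hklam : Tendsto (fun k : ℕ => (k : ℝ) * lam) atTop atTop := hnat.atTop_mul_const hlam
  have hklam_inv : Tendsto (fun k : ℕ => ((k : ℝ) * lam)⁻¹) atTop (nhds 0) :=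
    hklam.inv_tendsto_atTop
  have hlogk : Tendsto (fun k : ℕ => Real.log k) atTop atTop :=
    Real.tendsto_log_atTop.comp hnat
  have hLtop : Tendsto L atTop atTop := by
    apply Real.tendsto_log_atTop.comp
    exact (hnat.const_mul_atTop (by norm_num : (0:ℝ) < 4)).atTop_div_const (by positivity)
  have hLsplit : ∀ᶠ k : ℕ in atTop, L k = Real.log k + c0 := by
    filter_upwards [eventually_ge_atTop 1] with k hk
    have hk0 : (k : ℝ) ≠ 0 := Nat.cast_ne_zero.mpr (by omega)
    rw [hLdef, hc0]
    simp only
    rw [show 4 * (k:ℝ) / Real.pi ^ 2 = (k : ℝ) * (4 / Real.pi ^ 2) by ring,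
      Real.log_mul hk0 (by positivity)]
  have hlogdiv : Tendsto (fun k : ℕ => Real.log k / (k : ℝ)) atTop (nhds 0) := by
    have := (Real.tendsto_pow_log_div_mul_add_atTop 1 0 1 one_ne_zero).comp hnat
    simpa [Function.comp_def] using this
  have hlog2div : Tendsto (fun k : ℕ => (Real.log k) ^ 2 / (k : ℝ)) atTop (nhds 0) := by
    have := (Real.tendsto_pow_log_div_mul_add_atTop 1 0 2 one_ne_zero).comp hnat
    simpa [Function.comp_def] using this
  have hkinv : Tendsto (fun k : ℕ => ((k : ℝ))⁻¹) atTop (nhds 0) :=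
    tendsto_inv_atTop_zero.comp hnat
  have hLdiv : Tendsto (fun k : ℕ => L k / ((k : ℝ) * lam)) atTop (nhds 0) := by
    have h1 : Tendsto (fun k : ℕ => Real.log k / (k : ℝ) / lam + c0 * ((k : ℝ) * lam)⁻¹)
        atTop (nhds 0) := by
      simpa using (hlogdiv.div_const lam).add (hklam_inv.const_mul c0)
    refine Tendsto.congr' ?_ h1
    filter_upwards [hLsplit, eventually_ge_atTop 1] with k hk hk1
    have hk0 : (0 : ℝ) < k := by exact_mod_cast Nat.pos_of_ne_zero (by omega)
    rw [hk]
    field_simp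
    try ring
  have hγ0 : Tendsto γ atTop (nhds 0) := by
    have := hLdiv.sqrt
    simpa using this
  have hγ_small : ∀ᶠ k : ℕ in atTop, |γ k| ≤ 1 / 2 := by
    have habs : Tendsto (fun k => |γ k|) atTop (nhds 0) := by
      simpa using hγ0.abs
    exact habs.eventually_le_const (by norm_num)
  have hLpos : ∀ᶠ k : ℕ in atTop, 0 < L k := hLtop.eventually_gt_atTop 0
  have hlogpos : ∀ᶠ k : ℕ in atTop, 0 < Real.log k := hlogk.eventually_gt_atTop 0
  have hγpos : ∀ᶠ k : ℕ in atTop, 0 < γ k := by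
    filter_upwards [hLpos, eventually_ge_atTop 1] with k h1 h2
    have hk0 : (0 : ℝ) < k := by exact_mod_cast Nat.pos_of_ne_zero (by omega)
    exact Real.sqrt_pos.mpr (div_pos h1 (by positivity))
  have hγsq : ∀ᶠ k : ℕ in atTop, ((k : ℝ) * lam) * (γ k) ^ 2 = L k := by
    filter_upwards [hLpos, eventually_ge_atTop 1] with k h1 h2
    have hk0 : (0 : ℝ) < k := by exact_mod_cast Nat.pos_of_ne_zero (by omega)
    rw [hγdef]
    simp only
    rw [Real.sq_sqrt (by positivity)]
    field_simp
  have hL2div : Tendsto (fun k : ℕ => (L k) ^ 2 / ((k : ℝ) * lam)) atTop (nhds 0) := by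
    have h1 : Tendsto (fun k : ℕ =>
        ((Real.log k) ^ 2 / (k : ℝ) + 2 * c0 * (Real.log k / (k : ℝ))
          + c0 ^ 2 * ((k : ℝ))⁻¹) / lam) atTop (nhds 0) := by
      simpa using ((hlog2div.add (hlogdiv.const_mul (2 * c0))).add
        (hkinv.const_mul (c0 ^ 2))).div_const lam
    refine Tendsto.congr' ?_ h1
    filter_upwards [hLsplit, eventually_ge_atTop 1] with k hk hk1
    have hk0 : (0 : ℝ) < k := by exact_mod_cast Nat.pos_of_ne_zero (by omega)
    rw [hk]
    field_simp
    ring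
  have hε0 : Tendsto ε atTop (nhds 0) := by
    apply squeeze_zero_norm' (a := fun k : ℕ => 3 * ((L k) ^ 2 / ((k : ℝ) * lam)))
    · filter_upwards [hγsq, hγ_small, eventually_ge_atTop 1] with k h1 h2 hk
      have hk0 : (0 : ℝ) < k := by exact_mod_cast Nat.pos_of_ne_zero (by omega)
      have hkl : (0 : ℝ) < (k : ℝ) * lam := by positivity
      have hγ2 : (γ k) ^ 2 = L k / ((k : ℝ) * lam) := by
        field_simp
        linarith
      have hb := log_cos_bound h2
      have heq : ε k = ((k : ℝ) * lam) * (Real.log (Real.cos (γ k)) + (γ k) ^ 2 / 2) := by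
        rw [hεdef]
        simp only
        rw [mul_add, show ((k : ℝ) * lam) * ((γ k) ^ 2 / 2) = L k / 2 by rw [← h1]; ring]
      rw [Real.norm_eq_abs, heq, abs_mul, abs_of_pos hkl]
      calc ((k : ℝ) * lam) * |Real.log (Real.cos (γ k)) + (γ k) ^ 2 / 2|
          ≤ ((k : ℝ) * lam) * (3 * (γ k) ^ 4) := by
            exact mul_le_mul_of_nonneg_left hb hkl.le
        _ = 3 * ((L k) ^ 2 / ((k : ℝ) * lam)) := by
            rw [show (γ k) ^ 4 = ((γ k) ^ 2) ^ 2 by ring, hγ2]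
            field_simp
    · simpa using hL2div.const_mul 3
  have hcosγpos : ∀ᶠ k : ℕ in atTop, 0 < Real.cos (γ k) := by
    filter_upwards [hγ_small] with k hk
    apply Real.cos_pos_of_mem_Ioo
    constructor
    · nlinarith [Real.pi_gt_three, neg_abs_le (γ k)]
    · nlinarith [Real.pi_gt_three, le_abs_self (γ k)]
  have hrpow : ∀ᶠ k : ℕ in atTop, cp k = Real.exp (((k : ℝ) * lam) * Real.log (Real.cos (γ k))) := by
    filter_upwards [hcosγpos] with k hk
    rw [hcpdef]
    simp only
    rw [Real.rpow_def_of_pos hk, mul_comm]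
  have hexpL : ∀ᶠ k : ℕ in atTop, Real.exp (-(L k / 2)) = Real.pi / (2 * Real.sqrt k) := by
    filter_upwards [eventually_ge_atTop 1] with k hk
    have hk0 : (0 : ℝ) < k := by exact_mod_cast Nat.pos_of_ne_zero (by omega)
    have hy : (0 : ℝ) < 4 * k / Real.pi ^ 2 := by positivity
    have h1 : Real.exp (L k) = 4 * k / Real.pi ^ 2 := Real.exp_log hy
    have h3 : Real.exp (L k / 2) = Real.sqrt (4 * k / Real.pi ^ 2) := by
      rw [Real.exp_half, h1]
    have h4 : Real.sqrt (4 * (k : ℝ) / Real.pi ^ 2) = 2 * Real.sqrt k / Real.pi := by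
      rw [show 4 * (k : ℝ) / Real.pi ^ 2 = (2 * Real.sqrt k / Real.pi) ^ 2 by
        rw [div_pow, mul_pow, Real.sq_sqrt hk0.le]; norm_num]
      exact Real.sqrt_sq (by positivity)
    rw [Real.exp_neg, h3, h4, inv_div]
  have hsqrtk : Tendsto (fun k : ℕ => Real.sqrt k) atTop atTop := by
    have := (tendsto_rpow_atTop (by norm_num : (0:ℝ) < 1/2)).comp hnat
    refine this.congr fun k => ?_
    simp [Real.sqrt_eq_rpow, Function.comp]
  have hx_ne : Tendsto x atTop (nhdsWithin 0 {0}ᶜ) := by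
    apply tendsto_nhdsWithin_of_tendsto_nhds_of_eventually_within
    · exact hsqrtk.inv_tendsto_atTop
    · filter_upwards [eventually_ge_atTop 1] with k hk
      have : (0 : ℝ) < Real.sqrt k := Real.sqrt_pos.mpr
        (by exact_mod_cast Nat.pos_of_ne_zero (by omega))
      simp only [hxdef, Set.mem_compl_iff, Set.mem_singleton_iff]
      positivity
  have hsin_div : Tendsto (fun k : ℕ => Real.sin (x k) / x k) atTop (nhds 1) :=
    sin_div_lim.comp hx_ne
  have hRe : Tendsto (fun k : ℕ => (k : ℝ) * (Real.cos (x k) - 1)) atTop (nhds (-(1/2))) := by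
    have h1 := cos_sub_one_div_sq_lim.comp hx_ne
    refine Tendsto.congr' ?_ h1
    filter_upwards [eventually_ge_atTop 1] with k hk
    have hk0 : (0 : ℝ) < k := by exact_mod_cast Nat.pos_of_ne_zero (by omega)
    have hx2 : (x k) ^ 2 = ((k : ℝ))⁻¹ := by
      rw [hxdef]
      simp only
      rw [← Real.sqrt_inv, Real.sq_sqrt (by positivity)]
    simp only [Function.comp_def, hx2]
    rw [div_eq_mul_inv, inv_inv]
    ring
  have hIm : Tendsto (fun k : ℕ => (k : ℝ) * Real.sin (x k) * cp k) atTop (nhds (Real.pi / 2)) := by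
    have hεexp : Tendsto (fun k : ℕ => Real.exp (ε k)) atTop (nhds 1) := by
      simpa [Function.comp_def] using (Real.continuous_exp.tendsto 0).comp hε0
    have hmain : Tendsto (fun k : ℕ => (Real.sin (x k) / x k) * Real.exp (ε k) * (Real.pi / 2))
        atTop (nhds (Real.pi / 2)) := by
      simpa using (hsin_div.mul hεexp).mul_const (Real.pi / 2)
    refine Tendsto.congr' ?_ hmain
    filter_upwards [hrpow, hexpL, eventually_ge_atTop 1] with k h1 h2 hk
    have hk0 : (0 : ℝ) < k := by exact_mod_cast Nat.pos_of_ne_zero (by omega)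
    have hsk : (0 : ℝ) < Real.sqrt k := Real.sqrt_pos.mpr hk0
    have hsq : Real.sqrt k * Real.sqrt k = (k : ℝ) := Real.mul_self_sqrt hk0.le
    have hcp : cp k = Real.exp (ε k) * (Real.pi / (2 * Real.sqrt k)) := by
      rw [h1, show ((k : ℝ) * lam) * Real.log (Real.cos (γ k)) = ε k + (-(L k / 2)) by
        rw [hεdef]; ring, Real.exp_add, h2]
    rw [hcp, hxdef]
    simp only
    rw [div_eq_mul_inv, inv_inv]
    simp only [← one_div]
    field_simp
    linear_combination Real.sin (1 / Real.sqrt k) *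
      hsq
  -- the complex sequence
  set z : ℕ → ℂ := fun k => (((Real.cos (2 * (1 / (2 * Real.sqrt k)))) : ℂ)
      + Complex.I * ((Real.sin (2 * (1 / (2 * Real.sqrt k)))) : ℂ) * ((cp k : ℝ) : ℂ)) with hzdef
  set w : ℂ := ((-(1/2) : ℝ) : ℂ) + ((Real.pi / 2 : ℝ) : ℂ) * Complex.I with hwdef
  have hzw : Tendsto (fun k : ℕ => (k : ℂ) * (z k - 1)) atTop (nhds w) := by
    have h1 := ((Complex.continuous_ofReal.tendsto _).comp hRe).add
      (((Complex.continuous_ofReal.tendsto _).comp hIm).mul_const Complex.I)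
    refine Tendsto.congr' ?_ h1
    filter_upwards with k
    simp only [Function.comp_def, hzdef, h2β k]
    push_cast
    ring
  have hne : ∀ᶠ k : ℕ in atTop, z k ≠ 1 := by
    filter_upwards [hrpow, eventually_ge_atTop 1] with k h1 hk
    have hcp_pos : 0 < cp k := by rw [h1]; exact Real.exp_pos _
    have hk1 : (1 : ℝ) ≤ Real.sqrt k := Real.one_le_sqrt.mpr (by exact_mod_cast hk)
    have hsin_pos : 0 < Real.sin (2 * (1 / (2 * Real.sqrt k))) := by
      rw [h2β k, hxdef]
      simp only
      apply Real.sin_pos_of_pos_of_lt_pi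
      · positivity
      · have : (Real.sqrt k)⁻¹ ≤ 1 := by
          rw [inv_le_one_iff₀]; right; exact hk1
        nlinarith [Real.pi_gt_three]
    intro hcontra
    have him := congrArg Complex.im hcontra
    simp only [hzdef, Complex.add_im, Complex.ofReal_im, Complex.mul_im, Complex.mul_re,
      Complex.I_re, Complex.I_im, Complex.ofReal_re, Complex.one_im] at him
    nlinarith
  have hA : Tendsto (fun k : ℕ => z k ^ k) atTop (nhds (Complex.exp w)) := pow_tendsto_cexp hzw hne
  have hAim : Tendsto (fun k : ℕ => (z k ^ k).im) atTop (nhds (Real.exp (-(1/2)))) := by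
    have h1 := (Complex.continuous_im.tendsto _).comp hA
    have h2 : (Complex.exp w).im = Real.exp (-(1/2)) := by
      rw [Complex.exp_im, hwdef]
      simp [Real.sin_pi_div_two]
    rw [h2] at h1
    exact h1
  have hsqrt1 : Tendsto (fun k : ℕ => Real.sqrt (L k / Real.log k)) atTop (nhds 1) := by
    have h1 : Tendsto (fun k : ℕ => 1 + c0 * (Real.log k)⁻¹) atTop (nhds 1) := by
      simpa using (tendsto_const_nhds (x := (1:ℝ))).add (hlogk.inv_tendsto_atTop.const_mul c0)
    have h2 := h1.sqrt
    rw [Real.sqrt_one] at h2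
    refine Tendsto.congr' ?_ h2
    filter_upwards [hLsplit, hlogpos] with k hk hlg
    rw [hk]
    congr 1
    field_simp
  have hγ_ne : Tendsto γ atTop (nhdsWithin 0 {0}ᶜ) := by
    apply tendsto_nhdsWithin_of_tendsto_nhds_of_eventually_within _ hγ0
    filter_upwards [hγpos] with k hk
    simp only [Set.mem_compl_iff, Set.mem_singleton_iff]
    exact hk.ne'
  have hsinγdiv : Tendsto (fun k : ℕ => Real.sin (γ k) / γ k) atTop (nhds 1) :=
    sin_div_lim.comp hγ_ne
  have hfinal : Tendsto (fun k : ℕ => Real.sqrt (L k / Real.log k) * (Real.sin (γ k) / γ k)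
      * ((z k ^ k).im) * (1/2)) atTop (nhds (1 * 1 * Real.exp (-(1/2)) * (1/2))) :=
    ((hsqrt1.mul hsinγdiv).mul hAim).mul_const (1/2)
  have hval : 1 * 1 * Real.exp (-(1/2)) * (1/2 : ℝ) = 1 / (2 * Real.sqrt (Real.exp 1)) := by
    rw [← Real.exp_half, Real.exp_neg]
    field_simp
  rw [← hval]
  refine Tendsto.congr' ?_ hfinal
  filter_upwards [hγpos, hlogpos, hLpos, hγsq, eventually_ge_atTop 1] with k h1 h2 h3 h4 hk
  have hk0 : (0 : ℝ) < k := by exact_mod_cast Nat.pos_of_ne_zero (by omega)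
  have hkl : (0 : ℝ) < (k : ℝ) * lam := by positivity
  have hkey : Real.sqrt (((k : ℝ) * lam) / Real.log k) * γ k = Real.sqrt (L k / Real.log k) := by
    rw [hγdef]
    simp only
    rw [← Real.sqrt_mul (by positivity)]
    congr 1
    field_simp
  simp only
  rw [show (1:ℝ) / 2 + Real.sin (γ k) / 2 * ((z k ^ k).im) - 1/2
      = Real.sin (γ k) / 2 * ((z k ^ k).im) by ring]
  rw [← hkey]
  field_simp
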